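/- With the notation of the context, the map ψ_G : G → G defined on the semidirect product by ψ_G(x, e) = (ω_{t²}·x, e) (multiplication by ω_{t²} on the field component, identity on E) is a well-defined group automorphism of G which is class-preserving (it maps every element of G to a conjugate of itself) but is not an inner automorphism of G. In particular, G has a non-inner class-preserving automorphism, i.e. Out_c(G) is non-trivial. -/

import Mathlib

/-- The (multiplicative) group structure on `AddAut A` that Mathlib provided in the older
version (`AddAut.group`), with `g * h = h.trans g`. -/
instance AddAut.group {A : Type*} [Add A] : Group (AddAut A) where
  mul g h := AddEquiv.trans h g
  one := AddEquiv.refl _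
  inv := AddEquiv.symm
  mul_assoc _ _ _ := rfl
  one_mul _ := rfl
  mul_one _ := rfl
  inv_mul_cancel := AddEquiv.self_trans_symm

theorem AddAut.mul_apply' {A : Type*} [Add A] (e₁ e₂ : AddAut A) (a : A) :
    (e₁ * e₂) a = e₁ (e₂ a) := rfl

@[simp]
theorem AddAut.one_apply' {A : Type*} [Add A] (a : A) : (1 : AddAut A) a = a := rfl

@[simp]
theorem AddAut.inv_apply_self' {A : Type*} [Add A] (e : AddAut A) (a : A) : e (e⁻¹ a) = a :=
  e.apply_symm_apply a


lemma aux_pow_pow (K : Type) [Monoid K] (q t : ℕ) (x : K) (hx : x ^ q ^ t = x) (a : ℕ) :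
    x ^ q ^ a = x ^ q ^ (a % t) := by
  have hj : ∀ j : ℕ, x ^ (q ^ t) ^ j = x := by
    intro j
    induction j with
    | zero => simp
    | succ j ih => rw [pow_succ', pow_mul, hx, ih]
  have hqa : q ^ a = q ^ (a % t) * (q ^ t) ^ (a / t) := by
    rw [← pow_mul, ← pow_add, Nat.mod_add_div]
  rw [hqa, pow_mul', hj]

lemma aux_arith {q t s : ℕ} (hq : 2 ≤ q) (ht : 1 < t) (hdvd : t ^ 2 ∣ q - 1)
    (hs : s = (q ^ t - 1) / (t * (q - 1))) :
    s * t * (q - 1) = q ^ t - 1 ∧ s % t = 1 % t := by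
  have h1 : ∀ i : ℕ, t ^ 2 ∣ q ^ i - 1 := by
    intro i
    exact dvd_trans hdvd (by simpa using Nat.sub_dvd_pow_sub_pow q 1 i)
  have hsum : ∑ i ∈ Finset.range t, q ^ i = (∑ i ∈ Finset.range t, (q ^ i - 1)) + t := by
    rw [Finset.sum_congr rfl (fun i _ => (Nat.sub_add_cancel (Nat.one_le_pow _ _ (by omega))).symm)]
    rw [Finset.sum_add_distrib, Finset.sum_const, Finset.card_range, smul_eq_mul, mul_one]
  obtain ⟨b, hb⟩ : t ^ 2 ∣ ∑ i ∈ Finset.range t, (q ^ i - 1) :=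
    Finset.dvd_sum (fun i _ => h1 i)
  have hgeom : (q - 1) * ∑ i ∈ Finset.range t, q ^ i = q ^ t - 1 := by
    have : ((q : ℤ) - 1) * ∑ i ∈ Finset.range t, (q : ℤ) ^ i = (q : ℤ) ^ t - 1 := by
      rw [mul_comm]; exact geom_sum_mul _ _
    have hq1 : (1 : ℕ) ≤ q := by omega
    have hqt : (1 : ℕ) ≤ q ^ t := Nat.one_le_pow _ _ (by omega)
    zify [hq1, hqt]
    push_cast at this ⊢
    linarith [this]
  have hkey : q ^ t - 1 = (t * (q - 1)) * (1 + t * b) := by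
    rw [← hgeom, hsum, hb]; ring
  have hpos : 0 < t * (q - 1) := by
    have : 0 < q - 1 := by omega
    positivity
  have hs' : s = 1 + t * b := by rw [hs, hkey, Nat.mul_div_cancel_left _ hpos]
  constructor
  · rw [hs', hkey]; ring
  · rw [hs', Nat.add_mul_mod_self_left]

lemma aux_rep (K : Type) [Field K] [Fintype K] (q st : ℕ)
    (ωs ωt2 : K) (hω : ωt2 ^ q = ωt2) (hωs1 : ωs ^ st = 1) (hωs0 : ωs ≠ 0) (hω0 : ωt2 ≠ 0)
    (mωs mωt2 Φ : AddAut K)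
    (hmωs : ∀ x : K, mωs x = ωs * x) (hmωt2 : ∀ x : K, mωt2 x = ωt2 * x)
    (hΦ : ∀ x : K, Φ x = x ^ q) :
    ∀ f ∈ Subgroup.closure {mωs, Φ * mωt2},
      ∃ (μ : K) (c : ℕ), μ ≠ 0 ∧ (∀ x : K, f x = μ * x ^ q ^ c) ∧ μ ^ st = ωt2 ^ (c * st) := by
  have : Finite (AddAut K) :=
    Finite.of_injective (fun (f : AddAut K) => (f : K → K)) DFunLike.coe_injective
  set P : AddAut K → Prop := fun f =>
    ∃ (μ : K) (c : ℕ), μ ≠ 0 ∧ (∀ x : K, f x = μ * x ^ q ^ c) ∧ μ ^ st = ωt2 ^ (c * st) with hP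
  have hωqc : ∀ c : ℕ, ωt2 ^ q ^ c = ωt2 := by
    intro c
    induction c with
    | zero => simp
    | succ c ih => rw [pow_succ, pow_mul, ih, hω]
  have hP1 : P 1 := ⟨1, 0, one_ne_zero, by simp, by simp⟩
  have hPmul : ∀ f g, P f → P g → P (f * g) := by
    rintro f g ⟨μ, c, hμ0, hf, hμ⟩ ⟨ν, d, hν0, hg, hν⟩
    refine ⟨μ * ν ^ q ^ c, c + d, mul_ne_zero hμ0 (pow_ne_zero _ hν0), ?_, ?_⟩
    · intro x
      rw [AddAut.mul_apply', hg x, hf, mul_pow, ← pow_mul, ← pow_add, add_comm d c, mul_assoc]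
    · have h1 : (ν ^ q ^ c) ^ st = (ν ^ st) ^ q ^ c := by
        rw [← pow_mul, ← pow_mul, mul_comm]
      have h2 : (ωt2 ^ (d * st)) ^ q ^ c = (ωt2 ^ q ^ c) ^ (d * st) := by
        rw [← pow_mul, ← pow_mul, mul_comm]
      rw [mul_pow, h1, hν, h2, hωqc, hμ, ← pow_add]
      congr 1
      ring
  have hPpow : ∀ (f : AddAut K) (m : ℕ), P f → P (f ^ m) := by
    intro f m hf
    induction m with
    | zero => simpa using hP1
    | succ m ih => rw [pow_succ]; exact hPmul _ _ ih hf
  have hPinv : ∀ f, P f → P f⁻¹ := by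
    intro f hf
    have ho : 0 < orderOf f := orderOf_pos f
    have h1 : f * f ^ (orderOf f - 1) = 1 := by
      rw [← pow_succ', Nat.sub_add_cancel ho]
      exact pow_orderOf_eq_one f
    rw [inv_eq_of_mul_eq_one_right h1]
    exact hPpow _ _ hf
  intro f hf
  refine Subgroup.closure_induction (p := fun f _ => P f) ?_ hP1
    (fun x y _ _ hx hy => hPmul x y hx hy) (fun x _ hx => hPinv x hx) hf
  intro x hx
  rcases hx with h | h
  · subst h
    refine ⟨ωs, 0, hωs0, ?_, by simpa using hωs1⟩
    intro x; rw [hmωs]; simp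
  · rw [Set.mem_singleton_iff] at h
    subst h
    refine ⟨ωt2, 1, hω0, ?_, by rw [one_mul]⟩
    intro x
    rw [AddAut.mul_apply', hmωt2, hΦ, mul_pow, hω, pow_one]

def addAutSubgroupHom (K : Type*) [AddCommGroup K] (E : Subgroup (AddAut K)) :
    E →* MulAut (Multiplicative K) where
  toFun e := AddEquiv.toMultiplicative e.1
  map_one' := rfl
  map_mul' _ _ := rfl

theorem stmt0 (p t n s : ℕ) (hp : p.Prime) (ht : 1 < t) (htp : Nat.Coprime t p)
    (hn : 0 < n) (hnmod : p ^ n ≡ 1 [MOD t ^ 2])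
    (hnmin : ∀ m : ℕ, 0 < m → p ^ m ≡ 1 [MOD t ^ 2] → n ≤ m)
    (hs : s = (p ^ (n * t) - 1) / (t * (p ^ n - 1)))
    (K : Type) [Field K] [Fintype K] (hK : Fintype.card K = p ^ (n * t))
    (ωs ωt2 : K) (hωs : IsPrimitiveRoot ωs s) (hωt2 : IsPrimitiveRoot ωt2 (t ^ 2))
    (mωs mωt2 Φ : AddAut K)
    (hmωs : ∀ x : K, mωs x = ωs * x) (hmωt2 : ∀ x : K, mωt2 x = ωt2 * x)
    (hΦ : ∀ x : K, Φ x = x ^ (p ^ n)) :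
    ∃ ψ : MulAut (Multiplicative K ⋊[addAutSubgroupHom K (Subgroup.closure {mωs, Φ * mωt2})]
        (Subgroup.closure {mωs, Φ * mωt2})),
      (∀ a, ψ a = ⟨Multiplicative.ofAdd (ωt2 * Multiplicative.toAdd a.left), a.right⟩) ∧
      (∀ a, ∃ y, ψ a = y * a * y⁻¹) ∧
      ¬ ∃ y, ∀ a, ψ a = y * a * y⁻¹ := by
  classical
  have hfinaut : Finite (AddAut K) :=
    Finite.of_injective (fun (f : AddAut K) => (f : K → K)) DFunLike.coe_injective
  have hs2 : s = ((p ^ n) ^ t - 1) / (t * (p ^ n - 1)) := by rw [hs, ← pow_mul]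
  have hK2 : Fintype.card K = (p ^ n) ^ t := by rw [hK, ← pow_mul]
  have hq2' : 2 ≤ p ^ n := Nat.one_lt_pow hn.ne' hp.one_lt
  obtain ⟨q, hqdef⟩ : ∃ q, p ^ n = q := ⟨_, rfl⟩
  rw [hqdef] at hnmod hs2 hK2 hΦ hq2'
  set E := Subgroup.closure {mωs, Φ * mωt2} with hEdef
  have hq2 : 2 ≤ q := hq2'
  have ht0 : 0 < t := by omega
  have ht2 : t ^ 2 ≠ 0 := by positivity
  have hdvd : t ^ 2 ∣ q - 1 := (Nat.modEq_iff_dvd' (by omega : 1 ≤ q)).mp hnmod.symm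
  have hcard : Fintype.card K = q ^ t := hK2
  have hfrob : ∀ x : K, x ^ q ^ t = x := fun x => by
    rw [← hcard]; exact FiniteField.pow_card x
  have hs' : s = (q ^ t - 1) / (t * (q - 1)) := hs2
  have harith := aux_arith hq2 ht hdvd hs'
  have hNq : s * t * (q - 1) = q ^ t - 1 := harith.1
  have hqt2 : 2 ≤ q ^ t := le_trans hq2 (Nat.le_self_pow (by omega) q)
  have hs0 : s ≠ 0 := by
    intro h
    rw [h] at hNq
    simp at hNq
    omega
  have hcop : Nat.Coprime s t := by
    have h1 : s % t = 1 := by rw [harith.2, Nat.mod_eq_of_lt ht]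
    have : Nat.gcd t s = 1 := by rw [Nat.gcd_rec, h1, Nat.gcd_one_left]
    exact Nat.coprime_comm.mp this
  have hω0 : ωt2 ≠ 0 := by
    intro h
    have := hωt2.pow_eq_one
    rw [h, zero_pow ht2] at this
    exact zero_ne_one this
  have hωs0 : ωs ≠ 0 := by
    intro h
    have := hωs.pow_eq_one
    rw [h, zero_pow hs0] at this
    exact zero_ne_one this
  have hωt2pow : ωt2 ^ t ^ 2 = 1 := hωt2.pow_eq_one
  have hω : ωt2 ^ q = ωt2 := by
    have h2 : ωt2 ^ (q - 1) = 1 := by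
      obtain ⟨k, hk⟩ := hdvd
      rw [hk, pow_mul, hωt2pow, one_pow]
    have : ωt2 ^ q = ωt2 ^ (q - 1 + 1) := by congr 1; omega
    rw [this, pow_succ, h2, one_mul]
  have hωqc : ∀ c : ℕ, ωt2 ^ q ^ c = ωt2 := by
    intro c
    induction c with
    | zero => simp
    | succ c ih => rw [pow_succ, pow_mul, ih, hω]
  have hrepE := aux_rep K q (s * t) ωs ωt2 hω
    (by rw [pow_mul, hωs.pow_eq_one, one_pow]) hωs0 hω0 mωs mωt2 Φ hmωs hmωt2 hΦ
  have hmem1 : mωs ∈ E := Subgroup.subset_closure (by simp)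
  have hmem2 : Φ * mωt2 ∈ E := Subgroup.subset_closure (by simp)
  -- ζ and roots of unity
  have hords : orderOf ωs = s := hωs.eq_orderOf.symm
  have hordt : orderOf (ωt2 ^ t) = t := by
    have h := hωt2.pow (Nat.pos_of_ne_zero ht2) (sq t)
    exact h.eq_orderOf.symm
  have hordζ : orderOf (ωs * ωt2 ^ t) = s * t := by
    rw [(Commute.all ωs (ωt2 ^ t)).orderOf_mul_eq_mul_orderOf_of_coprime
      (by rw [hords, hordt]; exact hcop), hords, hordt]
  have hζprim : IsPrimitiveRoot (ωs * ωt2 ^ t) (s * t) := by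
    have := IsPrimitiveRoot.orderOf (ωs * ωt2 ^ t)
    rwa [hordζ] at this
  have hst0 : s * t ≠ 0 := by positivity
  have hroots : ∀ v : K, v ^ (s * t) = 1 → ∃ k, v = (ωs * ωt2 ^ t) ^ k := by
    intro v hv
    have : NeZero (s * t) := ⟨hst0⟩
    obtain ⟨i, _, hi⟩ := hζprim.eq_pow_of_pow_eq_one hv
    exact ⟨i, hi.symm⟩
  have hN : ∀ v : K, v ≠ 0 → v ^ (q ^ t - 1) = 1 := fun v hv => by
    rw [← hcard]; exact FiniteField.pow_card_sub_one_eq_one v hv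
  have hH : ∀ v : K, v ≠ 0 → ∃ k, v ^ (q - 1) = (ωs * ωt2 ^ t) ^ k := by
    intro v hv
    apply hroots
    rw [← pow_mul]
    have he : (q - 1) * (s * t) = q ^ t - 1 := by rw [← hNq]; ring
    rw [he]
    exact hN v hv
  have hcommω : ∀ f ∈ E, ∀ x : K, f (ωt2 * x) = ωt2 * f x := by
    intro f hf x
    obtain ⟨μ, c, hμ0, hrep, _⟩ := hrepE f hf
    rw [hrep, hrep, mul_pow, hωqc]
    ring
  -- the key conjugation lemma
  have key : ∀ e ∈ E, ∀ x : K, ∃ f ∈ E, ∃ u : K,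
      (∀ z : K, f (e z) = e (f z)) ∧ u + f x - e u = ωt2 * x := by
    intro e he x
    obtain ⟨μ, c, hμ0, hrep, -⟩ := hrepE e he
    by_cases hfix : ∀ z : K, e z = z → z = 0
    · -- Case A : no nonzero fixed points, conjugate by a translation
      have hinj : Function.Injective (fun u : K => u - e u) := by
        intro u v huv
        simp only at huv
        have h1 : e (u - v) = u - v := by
          rw [map_sub]; linear_combination -huv
        have h2 := hfix _ h1
        rw [sub_eq_zero] at h2
        exact h2
      have hsurj : Function.Surjective (fun u : K => u - e u) :=
        Finite.injective_iff_surjective.mp hinj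
      obtain ⟨u, hu⟩ := hsurj (ωt2 * x - x)
      refine ⟨1, one_mem E, u, fun z => by simp, ?_⟩
      simp only at hu
      simp only [AddAut.one_apply']
      linear_combination hu
    · push_neg at hfix
      obtain ⟨z, hez, hz0⟩ := hfix
      set ℓ := orderOf e with hℓdef
      have hℓ0 : 0 < ℓ := orderOf_pos e
      -- coefficients of the powers of e
      set M : ℕ → K := fun k => Nat.rec 1 (fun _ Mk => μ * Mk ^ q ^ c) k with hMdef
      have hM0 : M 0 = 1 := rfl
      have hMs : ∀ k, M (k + 1) = μ * M k ^ q ^ c := fun _ => rfl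
      have hprep : ∀ (k : ℕ) (v : K), (e ^ k) v = M k * v ^ q ^ (c * k) := by
        intro k
        induction k with
        | zero => intro v; simp [hM0]
        | succ k ih =>
          intro v
          have hexp : c * (k + 1) = c * k + c := by ring
          rw [pow_succ', AddAut.mul_apply', ih, hrep, hMs, mul_pow, ← pow_mul, ← pow_add, hexp,
            mul_assoc]
      -- the "trace" homomorphism T and the difference homomorphism D
      set Th : K →+ K := AddMonoidHom.mk' (fun v => ∑ k ∈ Finset.range ℓ, (e ^ k) v)
        (fun a b => by simp only [map_add, Finset.sum_add_distrib]) with hThdef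
      set Dh : K →+ K := AddMonoidHom.mk' (fun v => v - e v)
        (fun a b => by simp only [map_add]; ring) with hDhdef
      have hTh_apply : ∀ v : K, Th v = ∑ k ∈ Finset.range ℓ, (e ^ k) v := fun _ => rfl
      have hDh_apply : ∀ v : K, Dh v = v - e v := fun _ => rfl
      -- shift invariance
      have hshift : ∀ v : K,
          ∑ k ∈ Finset.range ℓ, (e ^ (k + 1)) v = ∑ k ∈ Finset.range ℓ, (e ^ k) v := by
        intro v
        have h1 := Finset.sum_range_succ (fun k => (e ^ k) v) ℓ
        have h2 := Finset.sum_range_succ' (fun k => (e ^ k) v) ℓ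
        have h3 : (e ^ ℓ) v = v := by rw [hℓdef, pow_orderOf_eq_one]; rfl
        have h4 : (e ^ 0) v = v := by simp
        rw [h3] at h1
        rw [h4] at h2
        linear_combination h1 - h2
      have hTe : ∀ v : K, e (Th v) = Th v := by
        intro v
        rw [hTh_apply, map_sum, ← hshift v]
        apply Finset.sum_congr rfl
        intro k _
        rw [pow_succ', AddAut.mul_apply']
      have hTev : ∀ v : K, Th (e v) = Th v := by
        intro v
        simp only [hTh_apply]
        rw [← hshift v]
        apply Finset.sum_congr rfl
        intro k _
        rw [pow_succ, AddAut.mul_apply']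
      have hTω : ∀ v : K, Th (ωt2 * v) = ωt2 * Th v := by
        intro v
        simp only [hTh_apply]
        rw [Finset.mul_sum]
        apply Finset.sum_congr rfl
        intro k _
        rw [hprep, hprep, mul_pow, hωqc]
        ring
      -- power of e fixing z
      have hfixpow : ∀ k : ℕ, (e ^ k) z = z := by
        intro k
        induction k with
        | zero => simp
        | succ k ih => rw [pow_succ, AddAut.mul_apply', hez, ih]
      -- small powers of e which are "pure multiplications" are trivial
      have hdist0 : ∀ d : ℕ, d < ℓ → t ∣ c * d → d = 0 := by
        intro d hd hdvd'
        have hmod : (c * d) % t = 0 := by omega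
        have h1 : ∀ v : K, (e ^ d) v = M d * v := by
          intro v
          rw [hprep, aux_pow_pow K q t v (hfrob v) (c * d), hmod, pow_zero, pow_one]
        have h2 : M d = 1 := by
          have h3 := h1 z
          rw [hfixpow d] at h3
          have h4 : M d * z = 1 * z := by rw [one_mul, ← h3]
          exact mul_right_cancel₀ hz0 h4
        have h4 : e ^ d = 1 := by
          ext v
          rw [h1, h2, one_mul]
          rfl
        have h5 : ℓ ∣ d := orderOf_dvd_of_pow_eq_one h4
        exact Nat.eq_zero_of_dvd_of_lt h5 hd
      -- T is nonzero somewhere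
      have hTne : ∃ v : K, Th v ≠ 0 := by
        by_contra hT0
        push_neg at hT0
        set P : Polynomial K :=
          ∑ k ∈ Finset.range ℓ, Polynomial.C (M k) * Polynomial.X ^ q ^ ((c * k) % t) with hPdef
        have hMne : ∀ k, M k ≠ 0 := by
          intro k
          induction k with
          | zero => rw [hM0]; exact one_ne_zero
          | succ k ih => rw [hMs]; exact mul_ne_zero hμ0 (pow_ne_zero _ ih)
        have hPeval : ∀ v : K, P.eval v = Th v := by
          intro v
          rw [hPdef, hTh_apply, Polynomial.eval_finset_sum]
          apply Finset.sum_congr rfl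
          intro k _
          rw [Polynomial.eval_mul, Polynomial.eval_C, Polynomial.eval_pow, Polynomial.eval_X,
            hprep, ← aux_pow_pow K q t v (hfrob v)]
        have hdeg : P.natDegree < Fintype.card K := by
          have h1 : P.natDegree ≤ q ^ (t - 1) := by
            rw [hPdef]
            apply Polynomial.natDegree_sum_le_of_forall_le
            intro k _
            refine le_trans (Polynomial.natDegree_C_mul_le _ _) ?_
            rw [Polynomial.natDegree_X_pow]
            have := Nat.mod_lt (c * k) ht0
            exact Nat.pow_le_pow_right (by omega) (by omega : (c * k) % t ≤ t - 1)
          have h2 : q ^ (t - 1) < q ^ t := Nat.pow_lt_pow_right (by omega) (by omega)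
          rw [hcard]
          omega
        have hP0 : P = 0 :=
          Polynomial.eq_zero_of_natDegree_lt_card_of_eval_eq_zero P Function.injective_id
            (fun v => by rw [hPeval]; exact hT0 v) hdeg
        have hcoeff : P.coeff 1 = 1 := by
          rw [hPdef, Polynomial.finset_sum_coeff]
          have hterm : ∀ k ∈ Finset.range ℓ,
              (Polynomial.C (M k) * Polynomial.X ^ q ^ ((c * k) % t)).coeff 1
                = if k = 0 then (1 : K) else 0 := by
            intro k hk
            rw [Polynomial.coeff_C_mul, Polynomial.coeff_X_pow]
            rcases eq_or_ne k 0 with h | h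
            · subst h
              simp [hM0]
            · rw [if_neg h, if_neg, mul_zero]
              intro habs
              have hne : (c * k) % t ≠ 0 := by
                intro h0
                exact h (hdist0 k (Finset.mem_range.mp hk) (Nat.dvd_of_mod_eq_zero h0))
              have := Nat.one_lt_pow hne (by omega : 1 < q)
              omega
          rw [Finset.sum_congr rfl hterm, Finset.sum_ite_eq' (Finset.range ℓ) 0 (fun _ => (1 : K))]
          rw [if_pos (Finset.mem_range.mpr hℓ0)]
        rw [hP0] at hcoeff
        simp at hcoeff
      -- range of T equals kernel of D
      have hRT : Th.range = Dh.ker := by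
        ext v
        rw [AddMonoidHom.mem_range, AddMonoidHom.mem_ker]
        constructor
        · rintro ⟨w, rfl⟩
          rw [hDh_apply, hTe w, sub_self]
        · intro hv
          rw [hDh_apply, sub_eq_zero] at hv
          obtain ⟨v₀, hv₀⟩ := hTne
          by_cases hvz : v = 0
          · exact ⟨0, by rw [map_zero, hvz]⟩
          · refine ⟨v / Th v₀ * v₀, ?_⟩
            have hfixv : μ * v ^ q ^ c = v := by rw [← hrep]; exact hv.symm
            have hfixv₀ : μ * (Th v₀) ^ q ^ c = Th v₀ := by rw [← hrep]; exact hTe v₀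
            have h1 : v ^ q ^ c = μ⁻¹ * v := by
              field_simp
              linear_combination hfixv
            have h2 : (Th v₀) ^ q ^ c = μ⁻¹ * Th v₀ := by
              field_simp
              linear_combination hfixv₀
            have hr : (v / Th v₀) ^ q ^ c = v / Th v₀ := by
              rw [div_pow, h1, h2, mul_div_mul_left _ _ (inv_ne_zero hμ0)]
            have hrall : ∀ j : ℕ, (v / Th v₀) ^ q ^ (c * j) = v / Th v₀ := by
              intro j
              induction j with
              | zero => rw [mul_zero, pow_zero, pow_one]
              | succ j ih =>
                have hexp : c * (j + 1) = c * j + c := by ring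
                rw [hexp, pow_add, pow_mul, ih, hr]
            have hscal : ∀ w' : K, Th ((v / Th v₀) * w') = (v / Th v₀) * Th w' := by
              intro w'
              simp only [hTh_apply]
              rw [Finset.mul_sum]
              apply Finset.sum_congr rfl
              intro k _
              rw [hprep, hprep, mul_pow, ← hTh_apply v₀, hrall]
              ring
            rw [hscal (v₀), div_mul_cancel₀ _ hv₀]
      -- cardinality argument : range of D equals kernel of T
      have hcards : ∀ F : K →+ K, Nat.card K = Nat.card F.range * Nat.card F.ker := by
        intro F
        rw [AddSubgroup.card_eq_card_quotient_mul_card_addSubgroup F.ker]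
        congr 1
        exact Nat.card_congr (QuotientAddGroup.quotientKerEquivRange F).toEquiv
      have hkerT_card : Nat.card Th.ker = Nat.card Dh.range := by
        have h1 : Nat.card Th.range = Nat.card Dh.ker := by rw [hRT]
        have h2 := hcards Dh
        have h3 := hcards Th
        rw [h1] at h3
        have h4 : 0 < Nat.card Dh.ker := Nat.card_pos
        apply Nat.eq_of_mul_eq_mul_left h4
        rw [← h3, h2]
        exact mul_comm _ _
      have hsub : (Dh.range : Set K) ⊆ (Th.ker : Set K) := by
        rintro v ⟨w, rfl⟩
        simp only [SetLike.mem_coe, AddMonoidHom.mem_ker]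
        rw [hDh_apply, map_sub, hTev, sub_self]
      have hRD : (Dh.range : Set K) = (Th.ker : Set K) := by
        apply Set.eq_of_subset_of_ncard_le hsub _ (Set.toFinite _)
        rw [← Nat.card_coe_set_eq, ← Nat.card_coe_set_eq]
        simp only [SetLike.coe_sort_coe]
        rw [hkerT_card]
      -- now split on whether T x vanishes
      have hwfix : e (Th x) = Th x := hTe x
      by_cases hw0 : Th x = 0
      · have hmemr : ωt2 * x - x ∈ Dh.range := by
          have hker : ωt2 * x - x ∈ (Th.ker : Set K) := by
            simp only [SetLike.mem_coe, AddMonoidHom.mem_ker]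
            rw [map_sub, hTω, hw0, mul_zero, sub_self]
          rw [← hRD] at hker
          exact hker
        obtain ⟨u, hu⟩ := hmemr
        rw [hDh_apply] at hu
        refine ⟨1, one_mem E, u, fun z' => by simp, ?_⟩
        simp only [AddAut.one_apply']
        linear_combination hu
      · obtain ⟨k, hk⟩ := hH (Th x)⁻¹ (inv_ne_zero hw0)
        set f : AddAut K := mωs ^ k * (Φ * mωt2) ^ (t * k + 1) with hfdef
        have hfmem : f ∈ E := mul_mem (pow_mem hmem1 k) (pow_mem hmem2 _)
        have hms_pow : ∀ (m : ℕ) (v : K), (mωs ^ m) v = ωs ^ m * v := by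
          intro m
          induction m with
          | zero => intro v; simp
          | succ m ih =>
            intro v
            rw [pow_succ', AddAut.mul_apply', ih, hmωs, pow_succ']
            ring
        have hgen : ∀ w : K, (Φ * mωt2) w = ωt2 * w ^ q := by
          intro w
          rw [AddAut.mul_apply', hmωt2, hΦ, mul_pow, hω]
        have hft_pow : ∀ (m : ℕ) (v : K), ((Φ * mωt2) ^ m) v = ωt2 ^ m * v ^ q ^ m := by
          intro m
          induction m with
          | zero => intro v; simp
          | succ m ih =>
            intro v
            have h1 : (ωt2 ^ m) ^ q = ωt2 ^ m := by rw [← pow_mul, mul_comm, pow_mul, hω]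
            have h2 : (v ^ q ^ m) ^ q = v ^ q ^ (m + 1) := by rw [← pow_mul, ← pow_succ]
            rw [pow_succ', AddAut.mul_apply', ih, hgen, mul_pow, h1, h2, pow_succ' ωt2 m]
            ring
        have hfapp : ∀ v : K, f v = ωt2 * (Th x)⁻¹ ^ (q - 1) * v ^ q := by
          intro v
          rw [hfdef, AddAut.mul_apply', hft_pow, hms_pow]
          have he2 : (t * k + 1) % t = 1 := by
            rw [Nat.mul_add_mod]
            exact Nat.mod_eq_of_lt ht
          have h1 : v ^ q ^ (t * k + 1) = v ^ q := by
            rw [aux_pow_pow K q t v (hfrob v) (t * k + 1), he2, pow_one]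
          have h2 : ωs ^ k * ωt2 ^ (t * k) = (Th x)⁻¹ ^ (q - 1) := by
            rw [hk, mul_pow, ← pow_mul]
          rw [h1, pow_succ' ωt2 (t * k), ← h2]
          ring
        have hμw : μ = Th x * ((Th x)⁻¹ ^ q ^ c) := by
          have h1 : μ * (Th x) ^ q ^ c = Th x := by rw [← hrep]; exact hwfix
          rw [inv_pow, ← div_eq_mul_inv, eq_div_iff (pow_ne_zero _ hw0)]
          exact h1
        have hq1 : q - 1 + 1 = q := by omega
        have hWW : (Th x)⁻¹ ^ (q - 1) * (Th x) ^ (q - 1) = 1 := by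
          rw [← mul_pow, inv_mul_cancel₀ hw0, one_pow]
        have hcomm : ∀ v : K, f (e v) = e (f v) := by
          intro v
          rw [hrep, hfapp, hfapp, hrep]
          have hA : (v ^ q ^ c) ^ q = (v ^ q) ^ q ^ c := by
            rw [← pow_mul, ← pow_mul, mul_comm]
          have hkey2 : (Th x)⁻¹ ^ (q - 1) * μ ^ q = μ * (Th x)⁻¹ ^ ((q - 1) * q ^ c) := by
            rw [hμw]
            have hL : (Th x * (Th x)⁻¹ ^ q ^ c) ^ q
                = Th x ^ (q - 1) * Th x * (Th x)⁻¹ ^ (q ^ c * q) := by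
              rw [mul_pow, ← pow_mul]
              congr 1
              rw [← pow_succ, hq1]
            rw [hL]
            have hR : q ^ c + (q - 1) * q ^ c = q ^ c * q := by
              have : 1 + (q - 1) = q := by omega
              calc q ^ c + (q - 1) * q ^ c = (1 + (q - 1)) * q ^ c := by ring
              _ = q ^ c * q := by rw [this]; ring
            calc (Th x)⁻¹ ^ (q - 1) * (Th x ^ (q - 1) * Th x * (Th x)⁻¹ ^ (q ^ c * q))
                = ((Th x)⁻¹ ^ (q - 1) * Th x ^ (q - 1)) * Th x * (Th x)⁻¹ ^ (q ^ c * q) := by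
                  ring
              _ = Th x * (Th x)⁻¹ ^ (q ^ c * q) := by rw [hWW]; ring
              _ = Th x * (Th x)⁻¹ ^ (q ^ c + (q - 1) * q ^ c) := by rw [hR]
              _ = Th x * (Th x)⁻¹ ^ q ^ c * (Th x)⁻¹ ^ ((q - 1) * q ^ c) := by
                  rw [pow_add]; ring
          calc ωt2 * (Th x)⁻¹ ^ (q - 1) * (μ * v ^ q ^ c) ^ q
              = ((Th x)⁻¹ ^ (q - 1) * μ ^ q) * (ωt2 * (v ^ q ^ c) ^ q) := by
                rw [mul_pow]; ring
            _ = (μ * (Th x)⁻¹ ^ ((q - 1) * q ^ c)) * (ωt2 * (v ^ q) ^ q ^ c) := by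
                rw [hkey2, hA]
            _ = μ * (ωt2 * (Th x)⁻¹ ^ (q - 1) * v ^ q) ^ q ^ c := by
                rw [mul_pow, mul_pow, hωqc, ← pow_mul]
                ring
        have hcommpow : ∀ (m : ℕ) (v : K), f ((e ^ m) v) = (e ^ m) (f v) := by
          intro m
          induction m with
          | zero => intro v; simp
          | succ m ih =>
            intro v
            rw [pow_succ']
            show f (e ((e ^ m) v)) = e ((e ^ m) (f v))
            rw [hcomm, ih]
        have hTfx : Th (f x) = f (Th x) := by
          simp only [hTh_apply]
          rw [map_sum]
          apply Finset.sum_congr rfl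
          intro j _
          rw [hcommpow]
        have hfW : f (Th x) = ωt2 * Th x := by
          rw [hfapp]
          have hTq : Th x ^ q = Th x ^ (q - 1) * Th x := by
            conv_lhs => rw [← hq1]
            rw [pow_succ]
          calc ωt2 * (Th x)⁻¹ ^ (q - 1) * Th x ^ q
              = ωt2 * ((Th x)⁻¹ ^ (q - 1) * Th x ^ (q - 1)) * Th x := by
                rw [hTq]; ring
            _ = ωt2 * Th x := by rw [hWW]; ring
        have hmemr : ωt2 * x - f x ∈ Dh.range := by
          have hker : ωt2 * x - f x ∈ (Th.ker : Set K) := by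
            simp only [SetLike.mem_coe, AddMonoidHom.mem_ker]
            rw [map_sub, hTω, hTfx, hfW, sub_self]
          rw [← hRD] at hker
          exact hker
        obtain ⟨u, hu⟩ := hmemr
        rw [hDh_apply] at hu
        exact ⟨f, hfmem, u, hcomm, by linear_combination hu⟩

  have hφapp : ∀ (e : E) (v : Multiplicative K),
      (addAutSubgroupHom K E e) v = Multiplicative.ofAdd (e.1 (Multiplicative.toAdd v)) :=
    fun _ _ => rfl
  -- the automorphism
  refine ⟨{ toFun := fun a => ⟨Multiplicative.ofAdd (ωt2 * Multiplicative.toAdd a.left), a.right⟩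
            invFun := fun a => ⟨Multiplicative.ofAdd (ωt2⁻¹ * Multiplicative.toAdd a.left), a.right⟩
            left_inv := ?_
            right_inv := ?_
            map_mul' := ?_ }, ?_, ?_, ?_⟩
  · intro a
    refine SemidirectProduct.ext ?_ rfl
    simp [inv_mul_cancel_left₀ hω0]
  · intro a
    refine SemidirectProduct.ext ?_ rfl
    simp [mul_inv_cancel_left₀ hω0]
  · intro a b
    refine SemidirectProduct.ext ?_ rfl
    simp only [SemidirectProduct.mul_left, hφapp, toAdd_mul, toAdd_ofAdd, ← ofAdd_add]
    congr 1
    rw [hcommω _ a.right.2, mul_add]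
  · intro a
    rfl
  · -- class preserving
    intro a
    obtain ⟨xm, er⟩ := a
    obtain ⟨f, hf, u, hcomm, hu⟩ := key er.1 er.2 (Multiplicative.toAdd xm)
    have hcommE : (⟨f, hf⟩ : E) * er = er * ⟨f, hf⟩ := by
      apply Subtype.ext
      simp only [Subgroup.coe_mul]
      ext z
      exact hcomm z
    have hconj : (⟨f, hf⟩ : E) * er * (⟨f, hf⟩ : E)⁻¹ = er := by
      rw [hcommE, mul_inv_cancel_right]
    refine ⟨⟨Multiplicative.ofAdd u, ⟨f, hf⟩⟩, ?_⟩
    refine SemidirectProduct.ext ?_ ?_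
    · show Multiplicative.ofAdd (ωt2 * Multiplicative.toAdd xm) = _
      simp only [SemidirectProduct.mul_left, SemidirectProduct.mul_right,
        SemidirectProduct.inv_left, SemidirectProduct.inv_right, ← map_mul, mul_assoc,
        mul_inv_cancel_right]
      simp only [hφapp, Subgroup.coe_inv, toAdd_mul, toAdd_ofAdd, toAdd_inv, ← ofAdd_add]
      congr 1
      rw [map_add f, hcomm, AddAut.inv_apply_self', map_neg, ← hu]
      ring
    · show er = _
      simp only [SemidirectProduct.mul_right, SemidirectProduct.inv_right]
      exact hconj.symm
  · -- not inner
    rintro ⟨y, hy⟩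
    have hfy : ∀ x : K, y.right.1 x = ωt2 * x := by
      intro x
      have h := congrArg SemidirectProduct.left (hy ⟨Multiplicative.ofAdd x, 1⟩)
      simp only [SemidirectProduct.mul_left, SemidirectProduct.mul_right,
        SemidirectProduct.inv_left, SemidirectProduct.inv_right, mul_one, ← map_mul,
        mul_inv_cancel, map_one, MulAut.one_apply, MulEquiv.coe_mk, Equiv.coe_fn_mk,
        AddAut.inv_apply_self', Subgroup.coe_inv,
        hφapp, toAdd_mul, toAdd_ofAdd, toAdd_inv, ← ofAdd_add] at h
      have h2 := congrArg Multiplicative.toAdd h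
      simp only [toAdd_mul, toAdd_ofAdd] at h2
      linear_combination -h2
    -- now derive a contradiction: multiplication by ωt2 is not in E
    obtain ⟨μ, c, hμ0, hrep, hcond⟩ := hrepE y.right.1 y.right.2
    have hμ : μ = ωt2 := by
      have h1 := (hfy 1).symm.trans (hrep 1)
      simpa using h1.symm
    have hxc : ∀ x : K, x ^ q ^ (c % t) = x := by
      intro x
      rw [← aux_pow_pow K q t x (hfrob x) c]
      have h1 := (hfy x).symm.trans (hrep x)
      rw [hμ] at h1
      exact (mul_left_cancel₀ hω0 h1).symm
    obtain ⟨g, hg⟩ := IsCyclic.exists_generator (α := Kˣ)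
    have hgord : orderOf g = q ^ t - 1 := by
      rw [orderOf_eq_card_of_forall_mem_zpowers hg, Nat.card_units, Nat.card_eq_fintype_card, hcard]
    have hgeq : (g : K) ^ q ^ (c % t) = g := hxc g
    have hmodeq : q ^ (c % t) ≡ 1 [MOD q ^ t - 1] := by
      have hu : g ^ q ^ (c % t) = g ^ 1 := by
        apply Units.ext
        rw [Units.val_pow_eq_pow_val, pow_one]
        exact hgeq
      have := pow_eq_pow_iff_modEq.mp hu
      rwa [hgord] at this
    have hct : c % t = 0 := by
      have hdl : (q ^ t - 1) ∣ q ^ (c % t) - 1 :=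
        (Nat.modEq_iff_dvd' (Nat.one_le_pow _ _ (by omega))).mp hmodeq.symm
      have hlt : q ^ (c % t) - 1 < q ^ t - 1 := by
        have h1 : c % t < t := Nat.mod_lt _ ht0
        have h2 : q ^ (c % t) < q ^ t := Nat.pow_lt_pow_right (by omega) h1
        have h3 : 1 ≤ q ^ (c % t) := Nat.one_le_pow _ _ (by omega)
        omega
      have h0 : q ^ (c % t) - 1 = 0 := Nat.eq_zero_of_dvd_of_lt hdl hlt
      have h4 : 1 ≤ q ^ (c % t) := Nat.one_le_pow _ _ (by omega)
      have h5 : q ^ (c % t) = 1 := by omega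
      by_contra hne
      have := Nat.one_lt_pow hne (by omega : 1 < q)
      omega
    have hc1 : ωt2 ^ (c * (s * t)) = 1 := by
      obtain ⟨c₁, hc₁⟩ : t ∣ c := Nat.dvd_of_mod_eq_zero hct
      have he : c * (s * t) = t ^ 2 * (c₁ * s) := by rw [hc₁]; ring
      rw [he, pow_mul, hωt2pow, one_pow]
    have hωst : ωt2 ^ (s * t) = 1 := by rw [← hμ, hcond, hc1]
    have hdvd2 : t ^ 2 ∣ s * t := hωt2.pow_eq_one_iff_dvd (s * t) |>.mp hωst
    have hts : t ∣ s := by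
      rw [pow_two] at hdvd2
      have := (Nat.mul_dvd_mul_iff_right ht0).mp hdvd2
      exact this
    have : t ∣ 1 := by
      have h6 : t ∣ Nat.gcd s t := Nat.dvd_gcd hts dvd_rfl
      rwa [hcop] at h6
    have := Nat.le_of_dvd one_pos this
    omega
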